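/- For any orthonormal basis {ψ_r}, r = 1,…,C(q,2), of Λ²V and any p-form ω on V, one has (1/4) Σ_r |[ψ_r, ω]|² = p(q−p)|ω|². -/

import Mathlib

open scoped BigOperators

namespace Paper

noncomputable section

/-- Coefficients of exterior forms w.r.t. the fixed orthonormal basis `e₁,…,e_q` of `V = ℝ^q`:
a form is identified with its family of coefficients indexed by subsets of `Fin q`. -/
abbrev Ext (q : ℕ) := Finset (Fin q) → ℝ

variable {q : ℕ}

/-- `(-1)^{#{j ∈ s | j < i}}` -/
def sgn (i : Fin q) (s : Finset (Fin q)) : ℝ := (-1 : ℝ) ^ (s.filter fun j => j < i).card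

/-- Exterior multiplication by the basis vector `e_i`. -/
def wB (i : Fin q) (ω : Ext q) : Ext q := fun s =>
  if i ∈ s then sgn i (s.erase i) * ω (s.erase i) else 0

/-- Interior product (contraction) with the basis vector `e_i`. -/
def iB (i : Fin q) (ω : Ext q) : Ext q := fun s =>
  if i ∈ s then 0 else sgn i s * ω (insert i s)

/-- The basis monomial `e_{i₁} ∧ ⋯ ∧ e_{i_p}`, for `s = {i₁ < ⋯ < i_p}`. -/
def bF (s : Finset (Fin q)) : Ext q := fun t => if t = s then 1 else 0

/-- The basis vector `e_i` of `V = ℝ^q`. -/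
def eB (i : Fin q) : Fin q → ℝ := Pi.single i 1

/-- Exterior multiplication by the vector `X ∈ V`. -/
def wV (X : Fin q → ℝ) (ω : Ext q) : Ext q := ∑ i, X i • wB i ω

/-- Interior product with the vector `X ∈ V`. -/
def iV (X : Fin q → ℝ) (ω : Ext q) : Ext q := ∑ i, X i • iB i ω

/-- Clifford multiplication `X · ω = X ∧ ω − X ⌟ ω` of a vector with a form. -/
def clV (X : Fin q → ℝ) (ω : Ext q) : Ext q := wV X ω - iV X ω

/-- Clifford multiplication `e_{i₁} · e_{i₂} ⋯ e_{i_p} · ω` for `s = {i₁ < ⋯ < i_p}`. -/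
def clB (s : Finset (Fin q)) (ω : Ext q) : Ext q :=
  (Finset.sort s (· ≤ ·)).foldr (fun i τ => clV (eB i) τ) ω

/-- Clifford multiplication of two forms. -/
def clM (ω₁ ω₂ : Ext q) : Ext q := ∑ s : Finset (Fin q), ω₁ s • clB s ω₂

/-- The bracket `[ω₁, ω₂] = ω₁ · ω₂ − ω₂ · ω₁`. -/
def brkt (ω₁ ω₂ : Ext q) : Ext q := clM ω₁ ω₂ - clM ω₂ ω₁

/-- Exterior multiplication by the monomial `e_{i₁} ∧ ⋯ ∧ e_{i_p}`. -/
def wBs (s : Finset (Fin q)) (ω : Ext q) : Ext q :=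
  (Finset.sort s (· ≤ ·)).foldr (fun i τ => wB i τ) ω

/-- The wedge product of two forms. -/
def wM (ω₁ ω₂ : Ext q) : Ext q := ∑ s : Finset (Fin q), ω₁ s • wBs s ω₂

/-- The inner product on forms, for which the basis monomials are orthonormal. -/
def ip (ω φ : Ext q) : ℝ := ∑ s : Finset (Fin q), ω s * φ s

/-- `ω` is a form of (pure) degree `p`. -/
def homog (p : ℕ) (ω : Ext q) : Prop := ∀ s : Finset (Fin q), s.card ≠ p → ω s = 0

/-- The inner product of two vectors of `V = ℝ^q`. -/
def dotP (X Y : Fin q → ℝ) : ℝ := ∑ i, X i * Y i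

/-- A vector of `V` regarded as a 1-form. -/
def oneF (X : Fin q → ℝ) : Ext q := ∑ i, X i • bF {i}

/-- The wedge `X ∧ Y` of two vectors. -/
def w2 (X Y : Fin q → ℝ) : Ext q := wV X (oneF Y)

/-- Two-element subsets, indexing the canonical orthonormal basis of `Λ²V`. -/
def twoSets (q : ℕ) : Finset (Finset (Fin q)) := Finset.univ.filter fun s => s.card = 2

/-- The Bochner operator quadratic form `⟨B_R^{[p]} ω, φ⟩ =
(1/4) Σ_{r,s} ⟨R ψ_r, ψ_s⟩ ⟨[ψ_r,ω],[ψ_s,φ]⟩`, computed in the canonical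
orthonormal basis `{e_i ∧ e_j}_{i<j}` of `Λ²V`. -/
def Bform (R : Ext q →ₗ[ℝ] Ext q) (ω φ : Ext q) : ℝ :=
  (1 / 4 : ℝ) * ∑ s ∈ twoSets q, ∑ t ∈ twoSets q,
    ip (R (bF s)) (bF t) * ip (brkt (bF s) ω) (brkt (bF t) φ)


/-! ### Auxiliary development -/

open scoped symmDiff

section Aux

variable {q : ℕ}

/-- Clifford multiplication by `e_i` as a linear map. -/
def clL (i : Fin q) : Ext q →ₗ[ℝ] Ext q where
  toFun ω := wB i ω - iB i ω
  map_add' ω φ := by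
    funext s
    by_cases h : i ∈ s <;>
      simp [wB, iB, h, mul_add] <;> ring
  map_smul' a ω := by
    funext s
    by_cases h : i ∈ s <;>
      simp [wB, iB, h, smul_eq_mul] <;> ring

lemma clV_eB (i : Fin q) (ω : Ext q) : clV (eB i) ω = clL i ω := by
  have hw : wV (eB i) ω = wB i ω := by
    unfold wV eB
    rw [Finset.sum_eq_single i]
    · simp
    · intro k _ hk; simp [Pi.single_apply, hk]
    · simp
  have hi : iV (eB i) ω = iB i ω := by
    unfold iV eB
    rw [Finset.sum_eq_single i]
    · simp
    · intro k _ hk; simp [Pi.single_apply, hk]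
    · simp
  simp only [clV, hw, hi]
  rfl

/-- Iterated Clifford multiplication along a list, as a linear map. -/
def clF (l : List (Fin q)) : Ext q →ₗ[ℝ] Ext q :=
  l.foldr (fun i g => (clL i).comp g) LinearMap.id

@[simp] lemma clF_nil (ω : Ext q) : clF [] ω = ω := rfl

@[simp] lemma clF_cons (i : Fin q) (l : List (Fin q)) (ω : Ext q) :
    clF (i :: l) ω = clL i (clF l ω) := rfl

lemma clB_eq (s : Finset (Fin q)) (ω : Ext q) :
    clB s ω = clF (Finset.sort s (· ≤ ·)) ω := by
  unfold clB
  induction (Finset.sort s (· ≤ ·)) with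
  | nil => rfl
  | cons a l ih =>
    show clV (eB a) _ = _
    rw [clV_eB, ih]
    rfl

/-- The sign occurring in `clL i (bF t)`. -/
def cc (i : Fin q) (t : Finset (Fin q)) : ℝ := (if i ∈ t then -1 else 1) * sgn i t

lemma sgn_mul_self (i : Fin q) (t : Finset (Fin q)) : sgn i t * sgn i t = 1 := by
  unfold sgn
  rw [← pow_add]
  exact Even.neg_one_pow ⟨_, rfl⟩

lemma cc_mul_self (i : Fin q) (t : Finset (Fin q)) : cc i t * cc i t = 1 := by
  unfold cc
  by_cases h : i ∈ t <;> simp [h] <;> try exact sgn_mul_self i t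

lemma sgn_erase (i : Fin q) (t : Finset (Fin q)) : sgn i (t.erase i) = sgn i t := by
  unfold sgn
  congr 1
  rw [Finset.filter_erase]
  rw [Finset.erase_eq_of_notMem]
  simp

lemma sgn_insert (i j : Fin q) (t : Finset (Fin q)) (hj : j ∉ t) :
    sgn i (insert j t) = (if j < i then -1 else 1) * sgn i t := by
  unfold sgn
  rw [Finset.filter_insert]
  by_cases h : j < i
  · rw [if_pos h, Finset.card_insert_of_notMem (by simp [hj]), if_pos h, pow_succ]
    ring
  · rw [if_neg h, if_neg h, one_mul]

lemma symmDiff_singleton (t : Finset (Fin q)) (i : Fin q) :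
    t ∆ {i} = if i ∈ t then t.erase i else insert i t := by
  by_cases h : i ∈ t <;>
  · ext a
    by_cases ha : a = i <;> simp [Finset.mem_symmDiff, h, ha] <;> tauto

lemma mem_symmDiff_singleton (i j : Fin q) (hij : i ≠ j) (t : Finset (Fin q)) :
    i ∈ t ∆ {j} ↔ i ∈ t := by
  simp [Finset.mem_symmDiff, hij]

lemma sgn_symmDiff (i j : Fin q) (hij : i ≠ j) (t : Finset (Fin q)) :
    sgn i (t ∆ {j}) = (if j < i then -1 else 1) * sgn i t := by
  rw [symmDiff_singleton]
  by_cases h : j ∈ t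
  · rw [if_pos h]
    have : t = insert j (t.erase j) := by rw [Finset.insert_erase h]
    conv_rhs => rw [this]
    rw [sgn_insert i j _ (Finset.notMem_erase j t)]
    by_cases hlt : j < i <;> simp [hlt]
  · rw [if_neg h, sgn_insert i j t h]

lemma cc_symmDiff (i j : Fin q) (hij : i ≠ j) (t : Finset (Fin q)) :
    cc i (t ∆ {j}) = (if j < i then -1 else 1) * cc i t := by
  unfold cc
  rw [if_congr (mem_symmDiff_singleton i j hij t) rfl rfl, sgn_symmDiff i j hij t]
  ring

lemma clL_bF (i : Fin q) (t : Finset (Fin q)) :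
    clL i (bF t) = cc i t • bF (t ∆ {i}) := by
  funext u
  show wB i (bF t) u - iB i (bF t) u = cc i t * bF (t ∆ {i}) u
  rw [symmDiff_singleton]
  by_cases h : i ∈ t <;> by_cases hu : i ∈ u
  · have h1 : u.erase i ≠ t := by
      intro he; rw [← he] at h; exact Finset.notMem_erase i u h
    have h2 : u ≠ t.erase i := by
      intro he; rw [he] at hu; exact Finset.notMem_erase i t hu
    simp [wB, iB, bF, cc, h, hu, h1, h2]
  · by_cases h2 : u = t.erase i
    · have h3 : insert i u = t := by rw [h2, Finset.insert_erase h]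
      simp only [wB, iB, bF, cc, if_neg hu, if_pos h, if_pos h2, if_pos h3]
      rw [h2, sgn_erase]
      ring
    · have h3 : insert i u ≠ t := by
        intro he
        apply h2
        rw [← he, Finset.erase_insert hu]
      simp [wB, iB, bF, cc, h, hu, h2, h3]
  · by_cases h2 : u = insert i t
    · have h3 : u.erase i = t := by rw [h2, Finset.erase_insert h]
      simp only [wB, iB, bF, cc, if_pos hu, if_neg h, if_pos h2, if_pos h3]
      rw [h3]
      ring
    · have h3 : u.erase i ≠ t := by
        intro he
        apply h2
        rw [← he, Finset.insert_erase hu]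
      simp [wB, iB, bF, cc, h, hu, h2, h3]
  · have h1 : insert i u ≠ t := by
      intro he; rw [← he] at h; exact h (Finset.mem_insert_self i u)
    have h2 : u ≠ insert i t := by
      intro he; rw [he] at hu; exact hu (Finset.mem_insert_self i t)
    simp [wB, iB, bF, cc, h, hu, h1, h2]

lemma expand (ω : Ext q) : ω = ∑ t : Finset (Fin q), ω t • bF t := by
  funext u
  rw [Finset.sum_apply]
  simp only [Pi.smul_apply, bF, smul_eq_mul, mul_ite, mul_one, mul_zero]
  rw [Finset.sum_ite_eq Finset.univ u ω]
  simp

lemma clL_clL (i j : Fin q) (ω : Ext q) :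
    clL i (clL j ω) = (if i = j then (1:ℝ) else -1) • clL j (clL i ω) := by
  by_cases hij : i = j
  · simp [hij]
  · rw [if_neg hij]
    have key : ∀ t : Finset (Fin q),
        clL i (clL j (bF t)) = (-1 : ℝ) • clL j (clL i (bF t)) := by
      intro t
      rw [clL_bF j t, map_smul, clL_bF i (t ∆ {j}), clL_bF i t, map_smul,
        clL_bF j (t ∆ {i})]
      rw [smul_smul, smul_smul, smul_smul]
      rw [symmDiff_right_comm t {j} {i}]
      congr 1
      rw [cc_symmDiff i j hij t, cc_symmDiff j i (Ne.symm hij) t]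
      rcases lt_trichotomy i j with h | h | h
      · rw [if_neg (asymm h), if_pos h]; ring
      · exact absurd h hij
      · rw [if_pos h, if_neg (asymm h)]; ring
    conv_lhs => rw [expand ω]
    conv_rhs => rw [expand ω]
    rw [map_sum, map_sum, map_sum, map_sum, Finset.smul_sum]
    apply Finset.sum_congr rfl
    intro t _
    rw [map_smul, map_smul, map_smul, map_smul, key t, smul_comm]

lemma clF_bF (l : List (Fin q)) (hl : l.Nodup) (t : Finset (Fin q)) :
    ∃ c : ℝ, c * c = 1 ∧ clF l (bF t) = c • bF (l.toFinset ∆ t) := by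
  induction l with
  | nil =>
    refine ⟨1, by norm_num, ?_⟩
    rw [List.toFinset_nil, ← Finset.bot_eq_empty, bot_symmDiff, one_smul]
    exact clF_nil (bF t)
  | cons i l ih =>
    obtain ⟨c, hc, hcl⟩ := ih (List.Nodup.of_cons hl)
    have hi : i ∉ l.toFinset := by
      simp only [List.mem_toFinset]
      exact (List.nodup_cons.mp hl).1
    refine ⟨c * cc i (l.toFinset ∆ t), ?_, ?_⟩
    · calc c * cc i (l.toFinset ∆ t) * (c * cc i (l.toFinset ∆ t))
          = (c * c) * (cc i (l.toFinset ∆ t) * cc i (l.toFinset ∆ t)) := by ring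
        _ = 1 := by rw [hc, cc_mul_self]; norm_num
    · rw [clF_cons, hcl, map_smul, clL_bF, smul_smul]
      have hset : (l.toFinset ∆ t) ∆ {i} = (i :: l).toFinset ∆ t := by
        rw [symmDiff_right_comm, List.toFinset_cons]
        congr 1
        rw [symmDiff_singleton, if_neg hi]
      rw [hset]

lemma clF_moveOne (i : Fin q) (l : List (Fin q)) (ω : Ext q) :
    clL i (clF l ω) =
      ((-1 : ℝ) ^ (l.filter (fun j => j ≠ i)).length) • clF l (clL i ω) := by
  induction l generalizing ω with
  | nil => simp
  | cons j l ih =>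
    show clL i (clL j (clF l ω)) = _
    by_cases h : i = j
    · subst h
      have hfil : (List.filter (fun j => decide (j ≠ i)) (i :: l)) =
          List.filter (fun j => decide (j ≠ i)) l := by
        simp [List.filter_cons]
      rw [ih ω, map_smul, hfil]
      rfl
    · have hfil : (List.filter (fun j' => decide (j' ≠ i)) (j :: l)) =
          j :: List.filter (fun j' => decide (j' ≠ i)) l := by
        simp [List.filter_cons, Ne.symm h]
      rw [clL_clL i j, if_neg h, ih ω, map_smul, smul_smul, hfil,
        List.length_cons, pow_succ]
      have : (-1 : ℝ) * (-1) ^ (List.filter (fun j => decide (j ≠ i)) l).length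
          = (-1 : ℝ) ^ (List.filter (fun j => decide (j ≠ i)) l).length * -1 := by ring
      rw [this]
      rfl

lemma clF_swap (l₁ l₂ : List (Fin q)) (ω : Ext q) :
    clF l₁ (clF l₂ ω) =
      ((-1 : ℝ) ^ ((l₁.map fun i => (l₂.filter (fun j => j ≠ i)).length).sum)) •
        clF l₂ (clF l₁ ω) := by
  induction l₁ generalizing ω with
  | nil => simp
  | cons i l₁ ih =>
    rw [clF_cons, ih ω, map_smul, clF_moveOne i l₂, clF_cons, smul_smul,
      List.map_cons, List.sum_cons, pow_add]
    congr 1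
    ring

lemma bF_build_list (l : List (Fin q)) (hl : l.Pairwise (· < ·)) :
    clF l (bF (∅ : Finset (Fin q))) = bF l.toFinset := by
  induction l with
  | nil => simp
  | cons i l ih =>
    have hlt : ∀ j ∈ l.toFinset, i < j := by
      intro j hj
      exact (List.pairwise_cons.mp hl).1 j (List.mem_toFinset.mp hj)
    have hi : i ∉ l.toFinset := fun hmem => lt_irrefl i (hlt i hmem)
    rw [clF_cons, ih (List.Pairwise.of_cons hl), clL_bF]
    have hsgn : sgn i l.toFinset = 1 := by
      unfold sgn
      have : l.toFinset.filter (fun j => j < i) = ∅ := by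
        rw [Finset.filter_eq_empty_iff]
        intro j hj
        exact not_lt_of_gt (hlt j hj)
      rw [this]
      simp
    have hcc : cc i l.toFinset = 1 := by
      unfold cc
      rw [if_neg hi, hsgn]
      norm_num
    rw [hcc, one_smul, List.toFinset_cons]
    congr 1
    rw [symmDiff_singleton, if_neg hi]

lemma bF_build (s : Finset (Fin q)) :
    clF (Finset.sort s (· ≤ ·)) (bF (∅ : Finset (Fin q))) = bF s := by
  rw [bF_build_list _ ((Finset.sortedLT_sort s).pairwise), Finset.sort_toFinset]

lemma filter_sort_length (s : Finset (Fin q)) (hs : s.card = 2) (i : Fin q) :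
    ((Finset.sort s (· ≤ ·)).filter (fun j => j ≠ i)).length
      = if i ∈ s then 1 else 2 := by
  have hlen : (Finset.sort s (· ≤ ·)).length = 2 := by
    rw [Finset.length_sort, hs]
  obtain ⟨a, b, hab⟩ := List.length_eq_two.mp hlen
  have hnd : a ≠ b := by
    have := Finset.sort_nodup s (· ≤ ·)
    rw [hab] at this
    simpa using (List.nodup_cons.mp this).1
  have hmem : ∀ j, j ∈ s ↔ (j = a ∨ j = b) := by
    intro j
    rw [← Finset.mem_sort (s := s) (· ≤ ·), hab]
    simp
  rw [hab]
  by_cases hia : i = a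
  · subst hia
    rw [if_pos ((hmem i).mpr (Or.inl rfl))]
    simp [List.filter_cons, Ne.symm hnd]
  · by_cases hib : i = b
    · subst hib
      rw [if_pos ((hmem i).mpr (Or.inr rfl))]
      simp [List.filter_cons, hnd, Ne.symm hia]
    · rw [if_neg (fun hmem' => by rcases (hmem i).mp hmem' with h | h <;> tauto)]
      simp [List.filter_cons, Ne.symm hia, Ne.symm hib]

lemma clB_bF_comm (s t : Finset (Fin q)) (hs : s.card = 2) :
    clB t (bF s) = ((-1 : ℝ) ^ ((s ∩ t).card)) • clB s (bF t) := by
  rw [clB_eq, clB_eq, ← bF_build s, ← bF_build t,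
    clF_swap (Finset.sort t (· ≤ ·)) (Finset.sort s (· ≤ ·))]
  congr 1
  have hmap : ((Finset.sort t (· ≤ ·)).map
      fun i => ((Finset.sort s (· ≤ ·)).filter (fun j => j ≠ i)).length).sum
      = (t.filter (fun i => i ∈ s)).card * 1 + (t.filter (fun i => i ∉ s)).card * 2 := by
    rw [← List.sum_toFinset _ (Finset.sort_nodup t (· ≤ ·))]
    · rw [Finset.sort_toFinset]
      have : ∀ i ∈ t, ((Finset.sort s (· ≤ ·)).filter (fun j => j ≠ i)).length
          = if i ∈ s then 1 else 2 := fun i _ => filter_sort_length s hs i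
      rw [Finset.sum_congr rfl this, Finset.sum_ite]
      simp [mul_comm]
  rw [hmap]
  have hfil : (t.filter (fun i => i ∈ s)).card = (s ∩ t).card := by
    congr 1
    rw [Finset.inter_comm]
    rfl
  rw [hfil, pow_add, pow_mul]
  norm_num

lemma ip_bF (u v : Finset (Fin q)) : ip (bF u) (bF v) = if u = v then 1 else 0 := by
  unfold ip bF
  by_cases h : u = v
  · subst h
    rw [if_pos rfl, Finset.sum_eq_single u] <;> simp +contextual
  · rw [if_neg h, Finset.sum_eq_zero]
    intro s _
    by_cases h1 : s = u <;> by_cases h2 : s = v <;> simp [h1, h2] at * <;> tauto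

lemma ip_sum_left {A : Finset (Finset (Fin q))} (F : Finset (Fin q) → Ext q) (g : Ext q) :
    ip (∑ t ∈ A, F t) g = ∑ t ∈ A, ip (F t) g := by
  unfold ip
  rw [Finset.sum_comm]
  apply Finset.sum_congr rfl
  intro s _
  rw [Finset.sum_apply, Finset.sum_mul]

lemma ip_sum_right {A : Finset (Finset (Fin q))} (F : Finset (Fin q) → Ext q) (g : Ext q) :
    ip g (∑ t ∈ A, F t) = ∑ t ∈ A, ip g (F t) := by
  unfold ip
  rw [Finset.sum_comm]
  apply Finset.sum_congr rfl
  intro s _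
  rw [Finset.sum_apply, Finset.mul_sum]

lemma ip_smul_left (a : ℝ) (f g : Ext q) : ip (a • f) g = a * ip f g := by
  unfold ip
  rw [Finset.mul_sum]
  apply Finset.sum_congr rfl
  intro s _
  simp [mul_assoc]

lemma ip_smul_right (a : ℝ) (f g : Ext q) : ip f (a • g) = a * ip f g := by
  unfold ip
  rw [Finset.mul_sum]
  apply Finset.sum_congr rfl
  intro s _
  simp
  ring

lemma ip_bilin {A : Finset (Finset (Fin q))} (a b : Finset (Fin q) → ℝ)
    (f : Finset (Fin q) → Ext q) :
    ip (∑ s ∈ A, a s • f s) (∑ t ∈ A, b t • f t)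
      = ∑ s ∈ A, ∑ t ∈ A, a s * b t * ip (f s) (f t) := by
  rw [ip_sum_left]
  apply Finset.sum_congr rfl
  intro s _
  rw [ip_smul_left, ip_sum_right, Finset.mul_sum]
  apply Finset.sum_congr rfl
  intro t _
  rw [ip_smul_right]
  ring

lemma ip_clB_bF (s t t' : Finset (Fin q)) :
    ip (clB s (bF t)) (clB s (bF t')) = if t = t' then 1 else 0 := by
  rw [clB_eq, clB_eq]
  by_cases h : t = t'
  · subst h
    obtain ⟨c, hc, hcl⟩ := clF_bF (Finset.sort s (· ≤ ·)) (Finset.sort_nodup s _) t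
    rw [hcl, ip_smul_left, ip_smul_right, ip_bF, if_pos rfl, if_pos rfl]
    linear_combination hc
  · obtain ⟨c, hc, hcl⟩ := clF_bF (Finset.sort s (· ≤ ·)) (Finset.sort_nodup s _) t
    obtain ⟨c', hc', hcl'⟩ := clF_bF (Finset.sort s (· ≤ ·)) (Finset.sort_nodup s _) t'
    rw [Finset.sort_toFinset] at hcl hcl'
    have hne : s ∆ t ≠ s ∆ t' := fun he => h (symmDiff_right_injective s he)
    rw [hcl, hcl', ip_smul_left, ip_smul_right, ip_bF, if_neg hne, if_neg h]
    ring

lemma clM_bF_left (s : Finset (Fin q)) (ω : Ext q) : clM (bF s) ω = clB s ω := by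
  unfold clM bF
  rw [Finset.sum_eq_single s]
  · rw [if_pos rfl, one_smul]
  · intro u _ hu
    rw [if_neg hu, zero_smul]
  · intro h
    exact absurd (Finset.mem_univ s) h

lemma clB_sum (t : Finset (Fin q)) (A : Finset (Finset (Fin q)))
    (c : Finset (Fin q) → ℝ) (φ : Finset (Fin q) → Ext q) :
    clB t (∑ s ∈ A, c s • φ s) = ∑ s ∈ A, c s • clB t (φ s) := by
  rw [clB_eq, map_sum]
  apply Finset.sum_congr rfl
  intro s _
  rw [map_smul, clB_eq]

lemma brkt_bF (s : Finset (Fin q)) (hs : s.card = 2) (ω : Ext q) :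
    brkt (bF s) ω
      = ∑ t : Finset (Fin q),
          (ω t * (1 - (-1 : ℝ) ^ ((s ∩ t).card))) • clB s (bF t) := by
  unfold brkt
  rw [clM_bF_left]
  have h1 : clB s ω = ∑ t : Finset (Fin q), ω t • clB s (bF t) := by
    conv_lhs => rw [expand ω]
    exact clB_sum s Finset.univ ω bF
  have h2 : clM ω (bF s)
      = ∑ t : Finset (Fin q), (ω t * (-1 : ℝ) ^ ((s ∩ t).card)) • clB s (bF t) := by
    unfold clM
    apply Finset.sum_congr rfl
    intro t _
    rw [clB_bF_comm s t hs, smul_smul]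
  rw [h1, h2, ← Finset.sum_sub_distrib]
  apply Finset.sum_congr rfl
  intro t _
  rw [← sub_smul]
  congr 1
  ring

lemma ip_brkt_bF (s : Finset (Fin q)) (hs : s.card = 2) (ω : Ext q) :
    ip (brkt (bF s) ω) (brkt (bF s) ω)
      = ∑ t : Finset (Fin q), (ω t) ^ 2 * (1 - (-1 : ℝ) ^ ((s ∩ t).card)) ^ 2 := by
  rw [brkt_bF s hs, ip_bilin]
  apply Finset.sum_congr rfl
  intro t _
  rw [Finset.sum_eq_single t]
  · rw [ip_clB_bF, if_pos rfl]
    ring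
  · intro u _ hu
    rw [ip_clB_bF, if_neg (fun he => hu he.symm)]
    ring
  · intro h
    exact absurd (Finset.mem_univ t) h

lemma count_pairs (t : Finset (Fin q)) :
    ((twoSets q).filter fun s => (s ∩ t).card = 1).card = t.card * tᶜ.card := by
  rw [← Finset.card_product]
  symm
  apply Finset.card_bij (fun p _ => ({p.1, p.2} : Finset (Fin q)))
  · intro p hp
    rw [Finset.mem_product] at hp
    have h1 : p.1 ∈ t := hp.1
    have h2 : p.2 ∉ t := Finset.mem_compl.mp hp.2
    have hne : p.1 ≠ p.2 := fun he => h2 (he ▸ h1)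
    rw [Finset.mem_filter]
    constructor
    · rw [twoSets, Finset.mem_filter]
      exact ⟨Finset.mem_univ _, Finset.card_pair hne⟩
    · have : ({p.1, p.2} : Finset (Fin q)) ∩ t = {p.1} := by
        ext x
        simp only [Finset.mem_inter, Finset.mem_insert, Finset.mem_singleton]
        constructor
        · rintro ⟨hx1 | hx2, hxt⟩
          · exact hx1
          · exact absurd (hx2 ▸ hxt) h2
        · rintro rfl
          exact ⟨Or.inl rfl, h1⟩
      rw [this, Finset.card_singleton]
  · intro p hp p' hp' h
    rw [Finset.mem_product] at hp hp'
    have h1 : p.1 ∈ t := hp.1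
    have h2 : p.2 ∉ t := Finset.mem_compl.mp hp.2
    have h1' : p'.1 ∈ t := hp'.1
    have h2' : p'.2 ∉ t := Finset.mem_compl.mp hp'.2
    have ha : p.1 = p'.1 := by
      have : p.1 ∈ ({p'.1, p'.2} : Finset (Fin q)) := by
        rw [← h]; exact Finset.mem_insert_self _ _
      rcases Finset.mem_insert.mp this with h' | h'
      · exact h'
      · exact absurd ((Finset.mem_singleton.mp h') ▸ h1) h2'
    have hb : p.2 = p'.2 := by
      have : p.2 ∈ ({p'.1, p'.2} : Finset (Fin q)) := by
        rw [← h]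
        exact Finset.mem_insert_of_mem (Finset.mem_singleton_self _)
      rcases Finset.mem_insert.mp this with h' | h'
      · exact absurd (h' ▸ h1') h2
      · exact Finset.mem_singleton.mp h'
    exact Prod.ext ha hb
  · intro s hs
    rw [Finset.mem_filter] at hs
    obtain ⟨hs2, hs1⟩ := hs
    rw [twoSets, Finset.mem_filter] at hs2
    obtain ⟨a, ha⟩ := Finset.card_eq_one.mp hs1
    have hsd : (s \ t).card = 1 := by
      have := Finset.card_inter_add_card_sdiff s t
      omega
    obtain ⟨b, hb⟩ := Finset.card_eq_one.mp hsd
    have hat : a ∈ t := by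
      have : a ∈ s ∩ t := ha ▸ Finset.mem_singleton_self a
      exact (Finset.mem_inter.mp this).2
    have hbt : b ∉ t := by
      have : b ∈ s \ t := hb ▸ Finset.mem_singleton_self b
      exact (Finset.mem_sdiff.mp this).2
    refine ⟨(a, b), Finset.mem_product.mpr ⟨hat, Finset.mem_compl.mpr hbt⟩, ?_⟩
    have hunion : s ∩ t ∪ s \ t = s := by
      ext x
      by_cases hx : x ∈ t <;> simp [hx] <;> tauto
    show ({a, b} : Finset (Fin q)) = s
    rw [Finset.insert_eq, ← hunion, ha, hb]

lemma sum_over_twoSets (t : Finset (Fin q)) :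
    ∑ s ∈ twoSets q, (1 - (-1 : ℝ) ^ ((s ∩ t).card)) ^ 2
      = 4 * (t.card : ℝ) * (tᶜ.card : ℝ) := by
  have h : ∀ s ∈ twoSets q, (1 - (-1 : ℝ) ^ ((s ∩ t).card)) ^ 2
      = if (s ∩ t).card = 1 then (4 : ℝ) else 0 := by
    intro s hs
    have hcard : s.card = 2 := (Finset.mem_filter.mp hs).2
    have hle : (s ∩ t).card ≤ 2 :=
      hcard ▸ Finset.card_le_card Finset.inter_subset_left
    have h3 : (s ∩ t).card = 0 ∨ (s ∩ t).card = 1 ∨ (s ∩ t).card = 2 := by omega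
    rcases h3 with h3 | h3 | h3 <;> rw [h3] <;> norm_num
  rw [Finset.sum_congr rfl h, Finset.sum_ite, Finset.sum_const, Finset.sum_const_zero,
    add_zero, nsmul_eq_mul, count_pairs]
  push_cast
  ring

lemma expand_homog (ψ : Ext q) (h : homog 2 ψ) :
    ψ = ∑ s ∈ twoSets q, ψ s • bF s := by
  conv_lhs => rw [expand ψ]
  symm
  apply Finset.sum_subset (Finset.filter_subset _ _)
  intro s _ hs
  have hcard : s.card ≠ 2 := by
    intro hc
    exact hs (Finset.mem_filter.mpr ⟨Finset.mem_univ s, hc⟩)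
  rw [h s hcard, zero_smul]

lemma brkt_expand (ψ : Ext q) (hψ : homog 2 ψ) (ω : Ext q) :
    brkt ψ ω = ∑ s ∈ twoSets q, ψ s • brkt (bF s) ω := by
  unfold brkt
  have h1 : clM ψ ω = ∑ s ∈ twoSets q, ψ s • clM (bF s) ω := by
    have hz : ∀ s ∈ Finset.univ, s ∉ twoSets q → ψ s • clB s ω = 0 := by
      intro s _ hs
      have hcard : s.card ≠ 2 := by
        intro hc
        exact hs (Finset.mem_filter.mpr ⟨Finset.mem_univ s, hc⟩)
      rw [hψ s hcard, zero_smul]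
    calc clM ψ ω = ∑ s : Finset (Fin q), ψ s • clB s ω := rfl
      _ = ∑ s ∈ twoSets q, ψ s • clB s ω :=
          (Finset.sum_subset (Finset.filter_subset _ _) hz).symm
      _ = ∑ s ∈ twoSets q, ψ s • clM (bF s) ω := by
          apply Finset.sum_congr rfl
          intro s _
          rw [clM_bF_left]
  have h2 : clM ω ψ = ∑ s ∈ twoSets q, ψ s • clM ω (bF s) := by
    conv_lhs => rw [expand_homog ψ hψ]
    unfold clM
    have step : ∀ u ∈ (Finset.univ : Finset (Finset (Fin q))),
        ω u • clB u (∑ s ∈ twoSets q, ψ s • bF s)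
          = ∑ s ∈ twoSets q, ψ s • (ω u • clB u (bF s)) := by
      intro u _
      rw [clB_sum, Finset.smul_sum]
      apply Finset.sum_congr rfl
      intro s _
      rw [smul_comm]
    rw [Finset.sum_congr rfl step, Finset.sum_comm]
    apply Finset.sum_congr rfl
    intro s _
    rw [Finset.smul_sum]
  rw [h1, h2, ← Finset.sum_sub_distrib]
  apply Finset.sum_congr rfl
  intro s _
  rw [← smul_sub]

lemma card_twoSets : (twoSets q).card = q.choose 2 := by
  have h : twoSets q = Finset.powersetCard 2 Finset.univ := by
    rw [Finset.powersetCard_eq_filter, Finset.powerset_univ]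
    rfl
  rw [h, Finset.card_powersetCard, Finset.card_univ, Fintype.card_fin]

lemma col_orth (ψ : Fin (q.choose 2) → Ext q) (hψ : ∀ r, homog 2 (ψ r))
    (hon : ∀ r s, ip (ψ r) (ψ s) = if r = s then 1 else 0)
    {s t : Finset (Fin q)} (hs : s ∈ twoSets q) (ht : t ∈ twoSets q) :
    ∑ r, ψ r s * ψ r t = if s = t then 1 else 0 := by
  classical
  have hcard : Fintype.card {x // x ∈ twoSets q} = q.choose 2 := by
    rw [Fintype.card_coe, card_twoSets]
  let e : {x // x ∈ twoSets q} ≃ Fin (q.choose 2) := Fintype.equivFinOfCardEq hcard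
  let A : Matrix (Fin (q.choose 2)) (Fin (q.choose 2)) ℝ :=
    fun r k => ψ r ((e.symm k : {x // x ∈ twoSets q}) : Finset (Fin q))
  have hA : A * A.transpose = 1 := by
    ext r r'
    rw [Matrix.mul_apply, Matrix.one_apply]
    have h1 : ∀ k, A r k * A.transpose k r'
        = (fun x : {x // x ∈ twoSets q} => ψ r (x : Finset (Fin q)) *
            ψ r' (x : Finset (Fin q))) (e.symm k) := by
      intro k
      rfl
    calc ∑ k, A r k * A.transpose k r'
        = ∑ k, (fun x : {x // x ∈ twoSets q} => ψ r (x : Finset (Fin q)) *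
            ψ r' (x : Finset (Fin q))) (e.symm k) := by
          apply Finset.sum_congr rfl
          intro k _
          exact h1 k
      _ = ∑ x : {x // x ∈ twoSets q}, ψ r (x : Finset (Fin q)) *
            ψ r' (x : Finset (Fin q)) :=
          Equiv.sum_comp e.symm
            (fun x : {x // x ∈ twoSets q} =>
              ψ r (x : Finset (Fin q)) * ψ r' (x : Finset (Fin q)))
      _ = ∑ u ∈ twoSets q, ψ r u * ψ r' u :=
          Finset.sum_coe_sort (twoSets q) (fun u => ψ r u * ψ r' u)
      _ = ∑ u : Finset (Fin q), ψ r u * ψ r' u := by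
          apply Finset.sum_subset (Finset.filter_subset _ _)
          intro u _ hu
          have hcard' : u.card ≠ 2 := by
            intro hc
            exact hu (Finset.mem_filter.mpr ⟨Finset.mem_univ u, hc⟩)
          rw [hψ r u hcard', zero_mul]
      _ = ip (ψ r) (ψ r') := rfl
      _ = if r = r' then 1 else 0 := hon r r'
  have hA' : A.transpose * A = 1 := mul_eq_one_comm.mp hA
  rw [← Matrix.ext_iff] at hA'
  have hentry := hA' (e ⟨s, hs⟩) (e ⟨t, ht⟩)
  rw [Matrix.mul_apply, Matrix.one_apply] at hentry
  have hL : ∑ r, ψ r s * ψ r t = ∑ r, A.transpose (e ⟨s, hs⟩) r * A r (e ⟨t, ht⟩) := by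
    apply Finset.sum_congr rfl
    intro r _
    show ψ r s * ψ r t = A r (e ⟨s, hs⟩) * A r (e ⟨t, ht⟩)
    simp only [A, Equiv.symm_apply_apply]
  rw [hL, hentry]
  by_cases hst : s = t
  · subst hst
    rw [if_pos rfl, if_pos rfl]
  · rw [if_neg hst, if_neg (fun he => hst (Subtype.ext_iff.mp (e.injective he)))]

end Aux

/-- Equation (3.5) of the paper. For any orthonormal basis `{ψ_r}` of
`Λ²V` and any `p`-form `ω`, `(1/4) Σ_r |[ψ_r, ω]|² = p(q−p)|ω|²`. -/
theorem statement_2 {q p : ℕ} (hq : 1 ≤ q)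
    (ψ : Fin (Nat.choose q 2) → Ext q)
    (hψ : ∀ r, homog 2 (ψ r))
    (hon : ∀ r s, ip (ψ r) (ψ s) = if r = s then 1 else 0)
    (ω : Ext q) (hω : homog p ω) :
    (1 / 4 : ℝ) * ∑ r, ip (brkt (ψ r) ω) (brkt (ψ r) ω)
      = (p : ℝ) * ((q : ℝ) - (p : ℝ)) * ip ω ω := by
  classical
  have key : ∑ r, ip (brkt (ψ r) ω) (brkt (ψ r) ω)
      = ∑ s ∈ twoSets q, ip (brkt (bF s) ω) (brkt (bF s) ω) := by
    have h1 : ∀ r, ip (brkt (ψ r) ω) (brkt (ψ r) ω)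
        = ∑ s ∈ twoSets q, ∑ t ∈ twoSets q, ψ r s * ψ r t *
            ip (brkt (bF s) ω) (brkt (bF t) ω) := by
      intro r
      conv_lhs => rw [brkt_expand (ψ r) (hψ r) ω]
      rw [ip_bilin]
    calc ∑ r, ip (brkt (ψ r) ω) (brkt (ψ r) ω)
        = ∑ r, ∑ s ∈ twoSets q, ∑ t ∈ twoSets q, ψ r s * ψ r t *
            ip (brkt (bF s) ω) (brkt (bF t) ω) := by
          apply Finset.sum_congr rfl
          intro r _
          exact h1 r
      _ = ∑ s ∈ twoSets q, ∑ t ∈ twoSets q, (∑ r, ψ r s * ψ r t) *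
            ip (brkt (bF s) ω) (brkt (bF t) ω) := by
          rw [Finset.sum_comm]
          apply Finset.sum_congr rfl
          intro s _
          rw [Finset.sum_comm]
          apply Finset.sum_congr rfl
          intro t _
          rw [Finset.sum_mul]
      _ = ∑ s ∈ twoSets q, ∑ t ∈ twoSets q, (if s = t then (1:ℝ) else 0) *
            ip (brkt (bF s) ω) (brkt (bF t) ω) := by
          apply Finset.sum_congr rfl
          intro s hs
          apply Finset.sum_congr rfl
          intro t ht
          rw [col_orth ψ hψ hon hs ht]
      _ = ∑ s ∈ twoSets q, ip (brkt (bF s) ω) (brkt (bF s) ω) := by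
          apply Finset.sum_congr rfl
          intro s hs
          rw [Finset.sum_eq_single s]
          · rw [if_pos rfl, one_mul]
          · intro t _ hts
            rw [if_neg (fun he => hts he.symm), zero_mul]
          · intro hns
            exact absurd hs hns
  have h2 : ∀ s ∈ twoSets q, ip (brkt (bF s) ω) (brkt (bF s) ω)
      = ∑ u : Finset (Fin q), (ω u) ^ 2 * (1 - (-1 : ℝ) ^ ((s ∩ u).card)) ^ 2 :=
    fun s hs => ip_brkt_bF s (Finset.mem_filter.mp hs).2 ω
  have h3 : ∀ u : Finset (Fin q),
      ∑ s ∈ twoSets q, (ω u) ^ 2 * (1 - (-1 : ℝ) ^ ((s ∩ u).card)) ^ 2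
        = 4 * ((p : ℝ) * ((q : ℝ) - (p : ℝ))) * (ω u) ^ 2 := by
    intro u
    rw [← Finset.mul_sum, sum_over_twoSets]
    by_cases hu : ω u = 0
    · rw [hu]
      ring
    · have hup : u.card = p := by
        by_contra hne
        exact hu (hω u hne)
      have hle : u.card ≤ q := by
        have := Finset.card_le_univ u
        rwa [Fintype.card_fin] at this
      rw [Finset.card_compl, Fintype.card_fin, hup]
      rw [Nat.cast_sub (hup ▸ hle)]
      ring
  calc (1 / 4 : ℝ) * ∑ r, ip (brkt (ψ r) ω) (brkt (ψ r) ω)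
      = (1 / 4 : ℝ) * ∑ u : Finset (Fin q),
          4 * ((p : ℝ) * ((q : ℝ) - (p : ℝ))) * (ω u) ^ 2 := by
        rw [key, Finset.sum_congr rfl h2, Finset.sum_comm,
          Finset.sum_congr rfl (fun u _ => h3 u)]
    _ = (p : ℝ) * ((q : ℝ) - (p : ℝ)) * ip ω ω := by
        unfold ip
        rw [Finset.mul_sum, Finset.mul_sum]
        apply Finset.sum_congr rfl
        intro u _
        ring

end
end Paper
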